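/- Let u ∈ ℍ be a unit quaternion (‖u‖ = 1). Then for every q ∈ ℍ with ‖q‖ < 1 and all α, β ∈ ℍ, the slice Hermitian metric satisfies H_q(α, β) = u⁻¹ · H_{uqu⁻¹}(uαu⁻¹, uβu⁻¹) · u. -/

import Mathlib

/-- The slice Hermitian metric of the quaternionic unit ball. -/
noncomputable def sliceHermitian (q α β : Quaternion ℝ) : Quaternion ℝ :=
  ((1 - ‖q‖ ^ 2) ^ 2)⁻¹ •
    ((1 - q ^ 2)⁻¹ * (α - q * α * q) * star (β - q * β * q) * (1 - star q ^ 2)⁻¹)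

lemma sliceH_conj_mul (u : Quaternion ℝ) (hu : u ≠ 0) (a b : Quaternion ℝ) :
    (u * a * u⁻¹) * (u * b * u⁻¹) = u * (a * b) * u⁻¹ := by
  simp [mul_assoc, inv_mul_cancel_left₀ hu]

lemma sliceH_conj_inv (u a : Quaternion ℝ) :
    (u * a * u⁻¹)⁻¹ = u * a⁻¹ * u⁻¹ := by
  rw [mul_inv_rev, mul_inv_rev, inv_inv, mul_assoc]

lemma sliceH_conj_star (u : Quaternion ℝ) (hu : ‖u‖ = 1) (a : Quaternion ℝ) :
    star (u * a * u⁻¹) = u * star a * u⁻¹ := by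
  have hinv : u⁻¹ = star u := by
    have h : Quaternion.normSq u = 1 := by
      rw [Quaternion.normSq_eq_norm_mul_self, hu]; norm_num
    rw [Quaternion.inv_def, h, inv_one, one_smul]
  simp [star_mul, hinv, mul_assoc]

/-- slice Hermitian representation formula: for every unit quaternion `u`,
`H_q(α, β) = u⁻¹ · H_{uqu⁻¹}(uαu⁻¹, uβu⁻¹) · u`. -/
theorem sliceHermitian_conj_equivariant (u : Quaternion ℝ) (hu : ‖u‖ = 1)
    (q : Quaternion ℝ) (hq : ‖q‖ < 1) (α β : Quaternion ℝ) :
    sliceHermitian q α β =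
      u⁻¹ * sliceHermitian (u * q * u⁻¹) (u * α * u⁻¹) (u * β * u⁻¹) * u := by
  have hu0 : u ≠ 0 := by
    intro h; rw [h, norm_zero] at hu; norm_num at hu
  have hnorm : ‖u * q * u⁻¹‖ = ‖q‖ := by
    rw [norm_mul, norm_mul, norm_inv, hu]; simp
  have key : sliceHermitian (u * q * u⁻¹) (u * α * u⁻¹) (u * β * u⁻¹)
      = u * sliceHermitian q α β * u⁻¹ := by
    have hsub : ∀ a b : Quaternion ℝ, u * a * u⁻¹ - u * b * u⁻¹ = u * (a - b) * u⁻¹ := by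
      intro a b; rw [mul_sub, sub_mul]
    have hsq : ∀ a : Quaternion ℝ, (u * a * u⁻¹) ^ 2 = u * a ^ 2 * u⁻¹ := by
      intro a; rw [sq, sliceH_conj_mul u hu0, ← sq]
    have hinv1 : ∀ a : Quaternion ℝ, (1 - u * a * u⁻¹)⁻¹ = u * (1 - a)⁻¹ * u⁻¹ := by
      intro a
      rw [show (1 : Quaternion ℝ) - u * a * u⁻¹ = u * (1 - a) * u⁻¹ by
        rw [mul_sub, mul_one, sub_mul, mul_inv_cancel₀ hu0], sliceH_conj_inv]
    have h1 : (1 - (u * q * u⁻¹) ^ 2)⁻¹ = u * (1 - q ^ 2)⁻¹ * u⁻¹ := by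
      rw [hsq]; exact hinv1 (q ^ 2)
    have h2 : (u * α * u⁻¹) - (u * q * u⁻¹) * (u * α * u⁻¹) * (u * q * u⁻¹)
        = u * (α - q * α * q) * u⁻¹ := by
      rw [sliceH_conj_mul u hu0, sliceH_conj_mul u hu0, hsub]
    have h3 : star ((u * β * u⁻¹) - (u * q * u⁻¹) * (u * β * u⁻¹) * (u * q * u⁻¹))
        = u * star (β - q * β * q) * u⁻¹ := by
      rw [sliceH_conj_mul u hu0, sliceH_conj_mul u hu0, hsub, sliceH_conj_star u hu]
    have h4 : (1 - star (u * q * u⁻¹) ^ 2)⁻¹ = u * (1 - star q ^ 2)⁻¹ * u⁻¹ := by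
      rw [sliceH_conj_star u hu, hsq]; exact hinv1 (star q ^ 2)
    unfold sliceHermitian
    rw [hnorm, h1, h2, h3, h4, sliceH_conj_mul u hu0, sliceH_conj_mul u hu0,
      sliceH_conj_mul u hu0, mul_smul_comm, smul_mul_assoc]
  rw [key, mul_assoc, mul_assoc, inv_mul_cancel₀ hu0, mul_one, ← mul_assoc,
    inv_mul_cancel₀ hu0, one_mul]
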